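/- Let b, d > 0 and let k ≥ 1 be an integer. For the random walk with step-up probability p = b/(b+d) started at 1, one has | P_1[τ_k < τ_0] − max(b − d, 0)/b | ≤ 1/k. -/

import Mathlib

open MeasureTheory ProbabilityTheory Filter Set
open scoped ENNReal

/-- The simple random walk started at `j` with increments `ξ`. -/
noncomputable def walk {Ω : Type*} (j : ℤ) (ξ : ℕ → Ω → ℤ) (n : ℕ) (ω : Ω) : ℤ :=
  j + ∑ i ∈ Finset.range n, ξ i ω

/-- The hitting time `τ_m = inf {n ≥ 0 : S_n = m}` (with `inf ∅ = ∞`) of the level `m`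
by the walk started at `j` with increments `ξ`. -/
noncomputable def hitTime {Ω : Type*} (j : ℤ) (ξ : ℕ → Ω → ℤ) (m : ℤ) (ω : Ω) : ℕ∞ :=
  ⨅ (n : ℕ) (_ : walk j ξ n ω = m), (n : ℕ∞)

/-! ### Auxiliary material -/

/-- Sign of a boolean step. -/
def sgnB (s : Bool) : ℤ := if s then 1 else -1

/-- Weight of a step value. -/
noncomputable def wgt (b d : ℝ) (z : ℤ) : ℝ≥0∞ :=
  if z = 1 then ENNReal.ofReal (b / (b + d))
  else if z = -1 then ENNReal.ofReal (1 - b / (b + d)) else 0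

/-- Partial sums of a boolean path. -/
def psum (j : ℤ) (e : ℕ → Bool) (m : ℕ) : ℤ := j + ∑ i ∈ Finset.range m, sgnB (e i)

/-- Extension of a finite boolean vector by `false`. -/
def extB {n : ℕ} (ε : Fin n → Bool) : ℕ → Bool := fun i => if h : i < n then ε ⟨i, h⟩ else false

/-- The path condition: the path from `j` reaches `k` at time `n` having avoided `0` and `k`
strictly before. -/
def Qpath (k : ℕ) (j : ℤ) (n : ℕ) (ε : Fin n → Bool) : Prop :=
  psum j (extB ε) n = (k : ℤ) ∧ ∀ m < n, psum j (extB ε) m ≠ 0 ∧ psum j (extB ε) m ≠ (k : ℤ)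

instance (k : ℕ) (j : ℤ) (n : ℕ) : DecidablePred (Qpath k j n) := fun ε => by
  unfold Qpath; infer_instance

/-- The combinatorial probability of first hitting `k` (avoiding 0) at time exactly `n`. -/
noncomputable def muP (b d : ℝ) (k : ℕ) (j : ℤ) (n : ℕ) : ℝ≥0∞ :=
  ∑ ε ∈ Finset.univ.filter (Qpath k j n), ∏ i, wgt b d (sgnB (ε i))

lemma solve_rec (p q : ℝ) (hp : 0 < p) (hpq : p + q = 1)
    (k : ℕ) (g : ℤ → ℝ) (h0 : g 0 = 0) (hkk : g k = 1)
    (hrec : ∀ j : ℤ, 0 < j → j < k → g j = p * g (j + 1) + q * g (j - 1)) :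
    g 1 * ∑ i ∈ Finset.range k, (q / p) ^ i = 1 := by
  set r := q / p with hr
  have key : ∀ n : ℕ, n ≤ k → g n = g 1 * ∑ i ∈ Finset.range n, r ^ i := by
    intro n
    induction n using Nat.strong_induction_on with
    | _ n ih =>
      match n with
      | 0 => intro _; simpa using h0
      | 1 => intro _; simp
      | (m + 2) =>
        intro hmk
        have h1 : g (m + 1 : ℕ) = g 1 * ∑ i ∈ Finset.range (m + 1), r ^ i :=
          ih (m + 1) (by omega) (by omega)
        have h2 : g (m : ℕ) = g 1 * ∑ i ∈ Finset.range m, r ^ i :=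
          ih m (by omega) (by omega)
        have hrec' := hrec ((m : ℤ) + 1) (by positivity) (by exact_mod_cast (by omega : (m:ℕ) + 1 < k))
        have e1 : ((m : ℤ) + 1) = ((m + 1 : ℕ) : ℤ) := by push_cast; ring
        rw [e1] at hrec'
        rw [show ((m+1:ℕ):ℤ) + 1 = ((m + 2 : ℕ) : ℤ) by push_cast; ring,
            show ((m+1:ℕ):ℤ) - 1 = ((m : ℕ) : ℤ) by push_cast; ring] at hrec'
        have hqr : q = p * r := by rw [hr]; field_simp
        have hpr : p * r ^ (m + 1) = q * r ^ m := by
          calc p * r ^ (m + 1) = (p * r) * r ^ m := by ring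
          _ = q * r ^ m := by rw [← hqr]
        have : p * g ((m + 2 : ℕ) : ℤ) = p * (g 1 * ∑ i ∈ Finset.range (m + 2), r ^ i) := by
          have T := hrec'
          rw [h1, h2] at T
          simp only [Finset.sum_range_succ] at T ⊢
          linear_combination (-1 : ℝ) * T - (g 1 * ∑ x ∈ Finset.range m, r ^ x) * hpq - (g 1 * r ^ m) * hpq - g 1 * hpr
        exact mul_left_cancel₀ (ne_of_gt hp) this
  have := key k le_rfl
  rw [hkk] at this
  linarith [this]

lemma arith_final (b d : ℝ) (hb : 0 < b) (hd : 0 < d) (k : ℕ) (hk : 1 ≤ k) (g : ℝ)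
    (hg : g * ∑ i ∈ Finset.range k, (d / b) ^ i = 1) :
    |g - max (b - d) 0 / b| ≤ 1 / k := by
  set r := d / b with hrdef
  have hr0 : 0 < r := div_pos hd hb
  set u := ∑ i ∈ Finset.range k, r ^ i with hu
  have hu_pos : 0 < u := by
    apply Finset.sum_pos (fun i _ => pow_pos hr0 i)
    exact Finset.nonempty_range_iff.mpr (by omega)
  have hgu : g = 1 / u := by field_simp at hg ⊢; linarith [hg]
  have hk0 : (0:ℝ) < k := by exact_mod_cast hk
  rcases le_or_gt 1 r with hr1 | hr1
  · have hbd : b ≤ d := by nlinarith [(one_le_div hb).mp hr1]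
    have hmax : max (b - d) 0 = 0 := max_eq_right (by linarith)
    have huk : (k : ℝ) ≤ u := by
      calc (k : ℝ) = ∑ i ∈ Finset.range k, (1:ℝ) := by simp
      _ ≤ u := Finset.sum_le_sum (fun i _ => one_le_pow₀ hr1)
    rw [hmax, hgu, zero_div, sub_zero, abs_of_nonneg (one_div_pos.mpr hu_pos).le]
    exact one_div_le_one_div_of_le hk0 huk
  · have hbd : d < b := by nlinarith [(div_lt_one hb).mp hr1]
    have hmax : max (b - d) 0 / b = 1 - r := by
      rw [max_eq_left (by linarith), hrdef]
      field_simp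
    have hgeom : (1 - r) * u = 1 - r ^ k := by
      have h := geom_sum_mul r k
      rw [← hu] at h
      linear_combination -h
    have h5 : (k : ℝ) * r ^ k ≤ u := by
      calc (k:ℝ) * r ^ k = ∑ _i ∈ Finset.range k, r ^ k := by
            rw [Finset.sum_const, Finset.card_range, nsmul_eq_mul]
      _ ≤ u := Finset.sum_le_sum fun i hi =>
            pow_le_pow_of_le_one hr0.le hr1.le (Finset.mem_range.mp hi).le
    have e1 : 1 / u - (1 - r) = r ^ k / u := by
      field_simp
      linarith [hgeom]
    have e2 : r ^ k / u ≤ 1 / k := by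
      rw [div_le_div_iff₀ hu_pos hk0]
      nlinarith [h5]
    have e3 : 0 ≤ 1 / u - (1 - r) := by rw [e1]; positivity
    rw [hgu, hmax, abs_of_nonneg e3, e1]
    exact e2

lemma extB_cons_zero {n : ℕ} (s : Bool) (ε : Fin n → Bool) : extB (Fin.cons s ε) 0 = s := by
  simp [extB]

lemma extB_cons_succ {n : ℕ} (s : Bool) (ε : Fin n → Bool) (i : ℕ) :
    extB (Fin.cons s ε) (i + 1) = extB ε i := by
  unfold extB
  by_cases h : i < n
  · rw [dif_pos h, dif_pos (by omega : i + 1 < n + 1)]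
    exact Fin.cons_succ (α := fun _ : Fin (n + 1) => Bool) s ε ⟨i, h⟩
  · rw [dif_neg h, dif_neg (by omega : ¬ (i + 1 < n + 1))]

lemma psum_cons {n : ℕ} (j : ℤ) (s : Bool) (ε : Fin n → Bool) (m : ℕ) :
    psum j (extB (Fin.cons s ε)) (m + 1) = psum (j + sgnB s) (extB ε) m := by
  unfold psum
  rw [Finset.sum_range_succ']
  have : ∀ i ∈ Finset.range m, sgnB (extB (Fin.cons s ε) (i + 1)) = sgnB (extB ε i) :=
    fun i _ => by rw [extB_cons_succ]
  rw [Finset.sum_congr rfl this, extB_cons_zero]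
  ring

lemma Qpath_cons {n : ℕ} (k : ℕ) (j : ℤ) (hj0 : j ≠ 0) (hjk : j ≠ (k : ℤ))
    (s : Bool) (ε : Fin n → Bool) :
    Qpath k j (n + 1) (Fin.cons s ε) ↔ Qpath k (j + sgnB s) n ε := by
  unfold Qpath
  constructor
  · rintro ⟨h1, h2⟩
    rw [psum_cons] at h1
    refine ⟨h1, fun m hm => ?_⟩
    have := h2 (m + 1) (by omega)
    rwa [psum_cons] at this
  · rintro ⟨h1, h2⟩
    rw [← psum_cons (s := s)] at h1
    refine ⟨h1, fun m hm => ?_⟩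
    cases m with
    | zero => simpa [psum] using ⟨hj0, hjk⟩
    | succ m' =>
      rw [psum_cons]
      exact h2 m' (by omega)

lemma muP_zero (b d : ℝ) (k : ℕ) (j : ℤ) :
    muP b d k j 0 = if j = (k : ℤ) then 1 else 0 := by
  classical
  have hQ : ∀ ε : Fin 0 → Bool, Qpath k j 0 ε ↔ j = (k : ℤ) := by
    intro ε
    unfold Qpath
    simp [psum]
  by_cases hj : j = (k : ℤ)
  · rw [if_pos hj]
    rw [muP, Finset.filter_true_of_mem (fun ε _ => (hQ ε).mpr hj)]
    simp
  · rw [if_neg hj]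
    rw [muP, Finset.filter_false_of_mem (fun ε _ => fun h => hj ((hQ ε).mp h))]
    simp

lemma muP_boundary (b d : ℝ) (k : ℕ) (n : ℕ) (j : ℤ) (h : j = 0 ∨ j = (k : ℤ)) :
    muP b d k j (n + 1) = 0 := by
  classical
  rw [muP, Finset.filter_false_of_mem, Finset.sum_empty]
  intro ε _ hQ
  have := hQ.2 0 (by omega)
  simp only [psum, Finset.range_zero, Finset.sum_empty, add_zero] at this
  tauto

lemma muP_rec (b d : ℝ) (k : ℕ) (n : ℕ) (j : ℤ) (hj0 : j ≠ 0) (hjk : j ≠ (k : ℤ)) :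
    muP b d k j (n + 1)
      = wgt b d 1 * muP b d k (j + 1) n + wgt b d (-1) * muP b d k (j - 1) n := by
  classical
  rw [muP, muP, muP, Finset.sum_filter, Finset.sum_filter, Finset.sum_filter]
  rw [← Equiv.sum_comp (Fin.consEquiv (fun _ => Bool))]
  rw [Fintype.sum_prod_type]
  rw [Fintype.sum_bool]
  have key : ∀ (s : Bool) (ε : Fin n → Bool),
      (if Qpath k j (n + 1) ((Fin.consEquiv (fun _ => Bool)) (s, ε))
        then ∏ i, wgt b d (sgnB ((Fin.consEquiv (fun _ => Bool)) (s, ε) i)) else 0)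
      = wgt b d (sgnB s) * (if Qpath k (j + sgnB s) n ε
          then ∏ i, wgt b d (sgnB (ε i)) else 0) := by
    intro s ε
    have hc : (Fin.consEquiv (fun _ => Bool)) (s, ε) = Fin.cons s ε := rfl
    rw [hc]
    rw [if_congr (Qpath_cons k j hj0 hjk s ε) rfl rfl]
    have hprod : (∏ i, wgt b d (sgnB (Fin.cons (α := fun _ => Bool) s ε i)))
        = wgt b d (sgnB s) * ∏ i, wgt b d (sgnB (ε i)) :=
      calc (∏ i, wgt b d (sgnB (Fin.cons (α := fun _ => Bool) s ε i)))
          = ∏ i, Fin.cons (α := fun _ => ℝ≥0∞) (wgt b d (sgnB s))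
              (fun i => wgt b d (sgnB (ε i))) i :=
            Finset.prod_congr rfl (fun i _ => by refine Fin.cases ?_ ?_ i <;> simp)
        _ = _ := Fin.prod_cons _ _
    rw [hprod, mul_ite, mul_zero]
  rw [Finset.sum_congr rfl (fun ε _ => key true ε),
    Finset.sum_congr rfl (fun ε _ => key false ε)]
  rw [← Finset.mul_sum, ← Finset.mul_sum]
  norm_num [sgnB, sub_eq_add_neg]

section Prob

variable {Ω : Type*} [MeasurableSpace Ω] (P : Measure Ω) [IsProbabilityMeasure P]
    (b d : ℝ) (hb : 0 < b) (hd : 0 < d)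
    (ξ : ℕ → Ω → ℤ) (hmeas : ∀ i, Measurable (ξ i))
    (hindep : iIndepFun ξ P)
    (hup : ∀ i, P {ω | ξ i ω = 1} = ENNReal.ofReal (b / (b + d)))
    (hdown : ∀ i, P {ω | ξ i ω = -1} = ENNReal.ofReal (1 - b / (b + d)))

include hb hd hmeas hup hdown in
/-- Marginal law of a single step. -/
lemma marginal (m : ℕ) (c : ℤ) : P {ω | ξ m ω = c} = wgt b d c := by
  have hbd : 0 < b + d := by linarith
  rcases eq_or_ne c 1 with rfl | hc1
  · rw [hup m, wgt]; simp
  rcases eq_or_ne c (-1) with rfl | hc2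
  · rw [hdown m, wgt]; norm_num
  have hA : MeasurableSet {ω | ξ m ω = 1} := (hmeas m) (measurableSet_singleton 1)
  have hB : MeasurableSet {ω | ξ m ω = -1} := (hmeas m) (measurableSet_singleton (-1))
  have hdisj : Disjoint {ω | ξ m ω = 1} {ω | ξ m ω = -1} := by
    rw [Set.disjoint_left]
    intro ω h1 h2
    simp only [Set.mem_setOf_eq] at h1 h2
    omega
  have hunion : P ({ω | ξ m ω = 1} ∪ {ω | ξ m ω = -1}) = 1 := by
    rw [measure_union hdisj hB, hup m, hdown m, ← ENNReal.ofReal_add (by positivity)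
      (by rw [sub_nonneg]; rw [div_le_one hbd]; linarith)]
    norm_num
  have hcompl : P ({ω | ξ m ω = 1} ∪ {ω | ξ m ω = -1})ᶜ = 0 := by
    rw [measure_compl (hA.union hB) (measure_ne_top P _), hunion, measure_univ, tsub_self]
  have hsub : {ω | ξ m ω = c} ⊆ ({ω | ξ m ω = 1} ∪ {ω | ξ m ω = -1})ᶜ := by
    intro ω h
    simp only [Set.mem_setOf_eq] at h
    simp only [Set.mem_compl_iff, Set.mem_union, Set.mem_setOf_eq, h]
    push_neg
    exact ⟨hc1, hc2⟩
  rw [measure_mono_null hsub hcompl, wgt, if_neg hc1, if_neg hc2]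

include hb hd hmeas hindep hup hdown in
/-- Probability of a basic cylinder ("atom"). -/
lemma atomP (n i₀ : ℕ) (e : ℕ → ℤ) :
    P {ω | ∀ i < n, ξ (i₀ + i) ω = e i} = ∏ i ∈ Finset.range n, wgt b d (e i) := by
  classical
  set S : Finset ℕ := (Finset.range n).image (fun i => i₀ + i) with hS
  have hinj : ∀ x ∈ Finset.range n, ∀ y ∈ Finset.range n, i₀ + x = i₀ + y → x = y := by
    intro x _ y _ h; omega
  have hset : {ω | ∀ i < n, ξ (i₀ + i) ω = e i}
      = ⋂ j ∈ S, ξ j ⁻¹' {e (j - i₀)} := by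
    ext ω
    simp only [Set.mem_setOf_eq, Set.mem_iInter, Set.mem_preimage, Set.mem_singleton_iff, hS,
      Finset.mem_image, Finset.mem_range, forall_exists_index, and_imp]
    constructor
    · rintro h j i hi rfl
      simpa [Nat.add_sub_cancel_left] using h i hi
    · intro h i hi
      simpa [Nat.add_sub_cancel_left] using h (i₀ + i) i hi rfl
  rw [hset, hindep.meas_biInter (fun j _ => ⟨{e (j - i₀)}, measurableSet_singleton _, rfl⟩)]
  rw [hS, Finset.prod_image hinj]
  exact Finset.prod_congr rfl fun i _ => by
    rw [show ξ (i₀ + i) ⁻¹' {e (i₀ + i - i₀)} = {ω | ξ (i₀ + i) ω = e (i₀ + i - i₀)} from rfl,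
      marginal P b d hb hd ξ hmeas hup hdown, Nat.add_sub_cancel_left]

include hb hd hmeas hindep hup hdown in
/-- Probability of a finite-dimensional cylinder event. -/
lemma cylP (n i₀ : ℕ) (Q : (Fin n → Bool) → Prop) [DecidablePred Q] :
    P {ω | ∃ ε : Fin n → Bool, Q ε ∧ ∀ i : Fin n, ξ (i₀ + i) ω = sgnB (ε i)}
      = ∑ ε ∈ Finset.univ.filter Q, ∏ i, wgt b d (sgnB (ε i)) := by
  classical
  set C : (Fin n → Bool) → Set Ω := fun ε => {ω | ∀ i : Fin n, ξ (i₀ + i) ω = sgnB (ε i)}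
    with hC
  have hsgnB_inj : Function.Injective sgnB := by
    intro x y h
    cases x <;> cases y <;> simp [sgnB] at h ⊢
  have hCmeas : ∀ ε, MeasurableSet (C ε) := by
    intro ε
    have : C ε = ⋂ i : Fin n, {ω | ξ (i₀ + i) ω = sgnB (ε i)} := by
      ext ω; simp [hC]
    rw [this]
    exact MeasurableSet.iInter fun i => (hmeas _) (measurableSet_singleton _)
  have hCdisj : ∀ ε ε' : Fin n → Bool, ε ≠ ε' → Disjoint (C ε) (C ε') := by
    intro ε ε' hne
    rw [Set.disjoint_left]
    intro ω h1 h2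
    apply hne
    funext i
    exact hsgnB_inj ((h1 i).symm.trans (h2 i))
  have hunion : {ω | ∃ ε : Fin n → Bool, Q ε ∧ ∀ i : Fin n, ξ (i₀ + i) ω = sgnB (ε i)}
      = ⋃ ε ∈ Finset.univ.filter Q, C ε := by
    ext ω
    simp only [Set.mem_setOf_eq, Set.mem_iUnion, Finset.mem_filter, Finset.mem_univ, true_and,
      hC, exists_prop]
  rw [hunion, measure_biUnion_finset ?_ (fun ε _ => hCmeas ε)]
  · refine Finset.sum_congr rfl fun ε _ => ?_
    have he : C ε = {ω | ∀ i < n, ξ (i₀ + i) ω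
        = (fun i => if h : i < n then sgnB (ε ⟨i, h⟩) else 0) i} := by
      ext ω
      simp only [hC, Set.mem_setOf_eq]
      constructor
      · intro h i hi
        rw [dif_pos hi]
        exact h ⟨i, hi⟩
      · intro h i
        have := h i i.isLt
        rwa [dif_pos i.isLt, Fin.eta] at this
    rw [he, atomP P b d hb hd ξ hmeas hindep hup hdown,
      ← Fin.prod_univ_eq_prod_range (fun i => wgt b d (if h : i < n then sgnB (ε ⟨i, h⟩) else 0))]
    exact Finset.prod_congr rfl fun i _ => by rw [dif_pos i.isLt, Fin.eta]
  · intro ε hε ε' hε' hne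
    exact hCdisj ε ε' hne

lemma hit_le {j m : ℤ} {n : ℕ} {ω : Ω} (h : walk j ξ n ω = m) : hitTime j ξ m ω ≤ n :=
  iInf₂_le n h

lemma lt_hit {j m : ℤ} {n : ℕ} {ω : Ω} (h : ∀ m' ≤ n, walk j ξ m' ω ≠ m) :
    (n : ℕ∞) < hitTime j ξ m ω := by
  have h2 : ((n + 1 : ℕ) : ℕ∞) ≤ hitTime j ξ m ω := by
    refine le_iInf₂ fun n' hn' => ?_
    have : n < n' := by
      by_contra hc
      exact h n' (by omega) hn'
    exact_mod_cast this
  calc (n : ℕ∞) < ((n + 1 : ℕ) : ℕ∞) := by exact_mod_cast n.lt_succ_self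
  _ ≤ _ := h2

lemma hit_exists {j m : ℤ} {n : ℕ} {ω : Ω} (h : hitTime j ξ m ω ≤ n) :
    ∃ m' ≤ n, walk j ξ m' ω = m := by
  by_contra hc
  push_neg at hc
  exact absurd h (not_le.mpr (lt_hit ξ hc))

end Prob

/-- The event that the walk from `j` first hits `k` at time exactly `n`, avoiding `0` before. -/
def Dset {Ω : Type*} (ξ : ℕ → Ω → ℤ) (k : ℕ) (j : ℤ) (n : ℕ) : Set Ω :=
  {ω | walk j ξ n ω = (k : ℤ) ∧ ∀ m < n, walk j ξ m ω ≠ 0 ∧ walk j ξ m ω ≠ (k : ℤ)}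

section Prob2

variable {Ω : Type*} [MeasurableSpace Ω] (P : Measure Ω) [IsProbabilityMeasure P]
    (b d : ℝ) (hb : 0 < b) (hd : 0 < d)
    (ξ : ℕ → Ω → ℤ) (hmeas : ∀ i, Measurable (ξ i))
    (hindep : iIndepFun ξ P)
    (hup : ∀ i, P {ω | ξ i ω = 1} = ENNReal.ofReal (b / (b + d)))
    (hdown : ∀ i, P {ω | ξ i ω = -1} = ENNReal.ofReal (1 - b / (b + d)))

lemma E_eq_iUnion (k : ℕ) (hk : 1 ≤ k) (j : ℤ) :
    {ω | hitTime j ξ (k : ℤ) ω < hitTime j ξ 0 ω} = ⋃ n, Dset ξ k j n := by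
  have hk0 : (k : ℤ) ≠ 0 := by exact_mod_cast (by omega : k ≠ 0)
  ext ω
  simp only [Set.mem_setOf_eq, Set.mem_iUnion]
  constructor
  · intro hlt
    have hex : ∃ n, walk j ξ n ω = (k : ℤ) := by
      by_contra hc
      push_neg at hc
      have : hitTime j ξ (k : ℤ) ω = ⊤ :=
        le_antisymm le_top (le_iInf₂ fun n hn => absurd hn (hc n))
      rw [this] at hlt
      exact absurd hlt (not_lt.mpr le_top)
    refine ⟨Nat.find hex, Nat.find_spec hex, fun m hm => ⟨?_, fun hw => Nat.find_min hex hm hw⟩⟩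
    intro hw0
    have h0le : hitTime j ξ 0 ω ≤ (m : ℕ∞) := hit_le ξ hw0
    have hkle : hitTime j ξ (k : ℤ) ω ≤ (m : ℕ∞) := le_trans hlt.le h0le
    obtain ⟨m', hm', hwm'⟩ := hit_exists ξ hkle
    exact Nat.find_min hex (by omega) hwm'
  · rintro ⟨n, hwn, hcond⟩
    have h1 : hitTime j ξ (k : ℤ) ω ≤ (n : ℕ∞) := hit_le ξ hwn
    have h2 : (n : ℕ∞) < hitTime j ξ 0 ω := by
      refine lt_hit ξ fun m' hm' hw => ?_
      rcases Nat.lt_or_ge m' n with h | h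
      · exact (hcond m' h).1 hw
      · have : m' = n := by omega
        rw [this, hwn] at hw
        exact hk0 hw
    exact lt_of_le_of_lt h1 h2

include hmeas in
lemma Dset_meas (k : ℕ) (j : ℤ) (n : ℕ) : MeasurableSet (Dset ξ k j n) := by
  have hw : ∀ nn : ℕ, Measurable (fun ω => walk j ξ nn ω) := by
    intro nn
    unfold walk
    exact measurable_const.add (Finset.measurable_sum _ fun i _ => hmeas i)
  have : Dset ξ k j n = (fun ω => walk j ξ n ω) ⁻¹' {(k : ℤ)}
      ∩ ⋂ (m : ℕ) (_ : m < n),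
        (((fun ω => walk j ξ m ω) ⁻¹' {0})ᶜ ∩ ((fun ω => walk j ξ m ω) ⁻¹' {(k : ℤ)})ᶜ) := by
    ext ω
    simp only [Dset, Set.mem_setOf_eq, Set.mem_inter_iff, Set.mem_preimage,
      Set.mem_singleton_iff, Set.mem_iInter, Set.mem_compl_iff]
  rw [this]
  exact ((hw n) (measurableSet_singleton _)).inter <| MeasurableSet.iInter fun m =>
    MeasurableSet.iInter fun _ =>
      (((hw m) (measurableSet_singleton _)).compl).inter ((hw m) (measurableSet_singleton _)).compl

lemma Dset_disj (k : ℕ) (j : ℤ) : Pairwise (Function.onFun Disjoint (Dset ξ k j)) := by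
  intro n n' hne
  rw [Function.onFun, Set.disjoint_left]
  intro ω h1 h2
  rcases Nat.lt_or_ge n n' with h | h
  · exact (h2.2 n h).2 h1.1
  · exact (h1.2 n' (by omega)).2 h2.1

include hb hd hmeas hup hdown in
lemma step_pm_null (i : ℕ) : P {ω | ξ i ω ≠ 1 ∧ ξ i ω ≠ -1} = 0 := by
  have hbd : 0 < b + d := by linarith
  have hA : MeasurableSet {ω | ξ i ω = 1} := (hmeas i) (measurableSet_singleton 1)
  have hB : MeasurableSet {ω | ξ i ω = -1} := (hmeas i) (measurableSet_singleton (-1))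
  have hdisj : Disjoint {ω | ξ i ω = 1} {ω | ξ i ω = -1} := by
    rw [Set.disjoint_left]
    intro ω h1 h2
    simp only [Set.mem_setOf_eq] at h1 h2
    omega
  have hunion : P ({ω | ξ i ω = 1} ∪ {ω | ξ i ω = -1}) = 1 := by
    rw [measure_union hdisj hB, hup i, hdown i, ← ENNReal.ofReal_add (by positivity)
      (by rw [sub_nonneg]; rw [div_le_one hbd]; linarith)]
    norm_num
  have hcompl : P ({ω | ξ i ω = 1} ∪ {ω | ξ i ω = -1})ᶜ = 0 := by
    rw [measure_compl (hA.union hB) (measure_ne_top P _), hunion, measure_univ, tsub_self]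
  refine measure_mono_null (fun ω h => ?_) hcompl
  simp only [Set.mem_setOf_eq] at h
  simp only [Set.mem_compl_iff, Set.mem_union, Set.mem_setOf_eq]
  push_neg
  exact h

include hb hd hmeas hindep hup hdown in
lemma PDset (k : ℕ) (j : ℤ) (n : ℕ) : P (Dset ξ k j n) = muP b d k j n := by
  classical
  set C : Set Ω := {ω | ∃ ε : Fin n → Bool, Qpath k j n ε ∧ ∀ i : Fin n, ξ (0 + i) ω = sgnB (ε i)}
    with hCdef
  have hwp : ∀ (ω : Ω) (ε : Fin n → Bool), (∀ i : Fin n, ξ (0 + i) ω = sgnB (ε i)) →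
      ∀ m ≤ n, walk j ξ m ω = psum j (extB ε) m := by
    intro ω ε hε m hm
    unfold walk psum
    congr 1
    refine Finset.sum_congr rfl fun i hi => ?_
    have hin : i < n := lt_of_lt_of_le (Finset.mem_range.mp hi) hm
    have h1 := hε ⟨i, hin⟩
    simp only [zero_add] at h1
    rw [extB, dif_pos hin]
    exact h1
  have hsub1 : C ⊆ Dset ξ k j n := by
    rintro ω ⟨ε, hQ, hε⟩
    have hw := hwp ω ε hε
    exact ⟨by rw [hw n le_rfl]; exact hQ.1,
      fun m hm => by rw [hw m hm.le]; exact hQ.2 m hm⟩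
  set Bad : Set Ω := ⋃ (i : ℕ) (_ : i < n), {ω | ξ i ω ≠ 1 ∧ ξ i ω ≠ -1} with hBad
  have hsub2 : Dset ξ k j n ⊆ C ∪ Bad := by
    intro ω hω
    by_cases hb2 : ω ∈ Bad
    · exact Or.inr hb2
    left
    have hgood : ∀ i, i < n → ξ i ω = 1 ∨ ξ i ω = -1 := by
      intro i hi
      by_contra hc
      push_neg at hc
      exact hb2 (Set.mem_biUnion hi ⟨hc.1, hc.2⟩)
    refine ⟨fun i => decide (ξ (i : ℕ) ω = 1), ?_, ?_⟩
    · have hε : ∀ i : Fin n, ξ (0 + i) ω = sgnB (decide (ξ (i : ℕ) ω = 1)) := by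
        intro i
        rcases hgood i i.isLt with h | h
        · simp [h, sgnB]
        · have : ξ (i : ℕ) ω ≠ 1 := by omega
          simp [zero_add, h, this, sgnB]
      have hw := hwp ω _ hε
      exact ⟨by rw [← hw n le_rfl]; exact hω.1, fun m hm => by rw [← hw m hm.le]; exact hω.2 m hm⟩
    · intro i
      rcases hgood i i.isLt with h | h
      · simp [h, sgnB]
      · have : ξ (i : ℕ) ω ≠ 1 := by omega
        simp [zero_add, h, this, sgnB]
  have hBadnull : P Bad = 0 := by
    rw [hBad]
    exact measure_iUnion_null fun i => measure_iUnion_null fun _ =>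
      step_pm_null P b d hb hd ξ hmeas hup hdown i
  have h1 : P C ≤ P (Dset ξ k j n) := measure_mono hsub1
  have h2 : P (Dset ξ k j n) ≤ P C := by
    calc P (Dset ξ k j n) ≤ P (C ∪ Bad) := measure_mono hsub2
    _ ≤ P C + P Bad := measure_union_le _ _
    _ = P C := by rw [hBadnull, add_zero]
  have hPC : P C = muP b d k j n := by
    rw [hCdef, cylP P b d hb hd ξ hmeas hindep hup hdown n 0 (Qpath k j n), muP]
  rw [← hPC]
  exact le_antisymm h2 h1

end Prob2

/-- Let `b, d > 0` and let `k ≥ 1` be an integer.  For the random walk with i.i.d. `±1`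
steps with step-up probability `p = b/(b+d)` started at `1`, one has
`| P_1[τ_k < τ_0] − max (b − d) 0 / b | ≤ 1/k`. -/
theorem stmt2 {Ω : Type*} [MeasurableSpace Ω] (P : Measure Ω) [IsProbabilityMeasure P]
    (b d : ℝ) (hb : 0 < b) (hd : 0 < d)
    (k : ℕ) (hk : 1 ≤ k)
    (ξ : ℕ → Ω → ℤ) (hmeas : ∀ i, Measurable (ξ i))
    (hindep : iIndepFun ξ P)
    (hup : ∀ i, P {ω | ξ i ω = 1} = ENNReal.ofReal (b / (b + d)))
    (hdown : ∀ i, P {ω | ξ i ω = -1} = ENNReal.ofReal (1 - b / (b + d))) :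
    |(P {ω | hitTime 1 ξ (k : ℤ) ω < hitTime 1 ξ 0 ω}).toReal - max (b - d) 0 / b|
      ≤ 1 / k := by
  classical
  have hbd : 0 < b + d := by linarith
  set p := b / (b + d) with hp
  have hp0 : 0 < p := by positivity
  have hp1 : p < 1 := by rw [hp, div_lt_one hbd]; linarith
  set pe := wgt b d 1 with hpe
  set qe := wgt b d (-1) with hqe
  have hpe_eq : pe = ENNReal.ofReal p := by rw [hpe, wgt]; simp [hp]
  have hqe_eq : qe = ENNReal.ofReal (1 - p) := by rw [hqe, wgt]; norm_num [hp]
  set F : ℤ → ℝ≥0∞ := fun j => ∑' n, muP b d k j n with hF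
  have hPE : ∀ j : ℤ, P {ω | hitTime j ξ (k : ℤ) ω < hitTime j ξ 0 ω} = F j := by
    intro j
    rw [E_eq_iUnion ξ k hk j, measure_iUnion (Dset_disj ξ k j) (Dset_meas ξ hmeas k j)]
    exact tsum_congr fun n => PDset P b d hb hd ξ hmeas hindep hup hdown k j n
  have hFle : ∀ j : ℤ, F j ≤ 1 := fun j => by rw [← hPE j]; exact prob_le_one
  have hFne : ∀ j : ℤ, F j ≠ ⊤ := fun j => ne_top_of_le_ne_top ENNReal.one_ne_top (hFle j)
  have hF0 : F 0 = 0 := by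
    rw [hF]
    simp only
    convert tsum_zero with n
    cases n with
    | zero => rw [muP_zero, if_neg (by omega)]
    | succ n => exact muP_boundary b d k n 0 (Or.inl rfl)
  have hFk : F (k : ℤ) = 1 := by
    rw [hF]
    simp only
    rw [tsum_eq_zero_add' ENNReal.summable, muP_zero, if_pos rfl]
    have hz : ∀ n : ℕ, muP b d k (k : ℤ) (n + 1) = 0 :=
      fun n => muP_boundary b d k n _ (Or.inr rfl)
    simp [hz]
  have hrecF : ∀ j : ℤ, 0 < j → j < k → F j = pe * F (j + 1) + qe * F (j - 1) := by
    intro j h0 hk'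
    rw [hF]
    simp only
    rw [tsum_eq_zero_add' ENNReal.summable, muP_zero, if_neg (by omega)]
    have hr : ∀ n : ℕ, muP b d k j (n + 1)
        = pe * muP b d k (j + 1) n + qe * muP b d k (j - 1) n :=
      fun n => muP_rec b d k n j (by omega) (by omega)
    rw [tsum_congr hr, ENNReal.tsum_add, ENNReal.tsum_mul_left, ENNReal.tsum_mul_left, zero_add]
  set g : ℤ → ℝ := fun j => (F j).toReal with hg
  have hgrec : ∀ j : ℤ, 0 < j → j < k → g j = p * g (j + 1) + (1 - p) * g (j - 1) := by
    intro j h0 hk'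
    rw [hg]
    simp only
    rw [hrecF j h0 hk',
      ENNReal.toReal_add
        (ENNReal.mul_ne_top (by rw [hpe_eq]; exact ENNReal.ofReal_ne_top) (hFne _))
        (ENNReal.mul_ne_top (by rw [hqe_eq]; exact ENNReal.ofReal_ne_top) (hFne _)),
      ENNReal.toReal_mul, ENNReal.toReal_mul, hpe_eq, hqe_eq,
      ENNReal.toReal_ofReal hp0.le, ENNReal.toReal_ofReal (by linarith)]
  have hsolve := solve_rec p (1 - p) hp0 (by ring) k g
    (by rw [hg]; simp only; rw [hF0]; simp)
    (by rw [hg]; simp only; rw [hFk]; simp) hgrec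
  have hqp : (1 - p) / p = d / b := by
    rw [hp]
    field_simp
    ring
  rw [hqp] at hsolve
  have hfinal := arith_final b d hb hd k hk (g 1) hsolve
  have hthis : (P {ω | hitTime 1 ξ (k : ℤ) ω < hitTime 1 ξ 0 ω}).toReal = g 1 := by
    rw [hg]
    simp only
    rw [hPE 1]
  rw [hthis]
  exact hfinal
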